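/- Let μ be the Gauss–Kuzmin measure on (0,1) and T the Gauss map. Define Δ(t) := ∫₀¹ (e^{−it⌊1/T(x)⌋} − 1)(e^{it⌊1/x⌋} − 1) dμ(x). Then there is a constant C with |Δ(t)| ≤ C (t log t)² for all t ∈ (0, 1/2). -/

import Mathlib

open MeasureTheory
open scoped ENNReal

noncomputable def gaussMeasure : Measure ℝ :=
  (volume.restrict (Set.Ioo (0:ℝ) 1)).withDensity
    (fun x => ENNReal.ofReal (1 / ((1 + x) * Real.log 2)))

noncomputable def gaussMap (x : ℝ) : ℝ := Int.fract (1 / x)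



lemma exp_I_bound (θ : ℝ) : ‖Complex.exp ((θ:ℂ) * Complex.I) - 1‖ ≤ min 2 (2*|θ|) := by
  have h2 : ‖Complex.exp ((θ:ℂ) * Complex.I) - 1‖ ≤ 2 := by
    calc ‖Complex.exp ((θ:ℂ) * Complex.I) - 1‖
        ≤ ‖Complex.exp ((θ:ℂ) * Complex.I)‖ + ‖(1:ℂ)‖ := norm_sub_le _ _
      _ = 2 := by
          rw [Complex.norm_exp_ofReal_mul_I]
          norm_num
  rcases le_or_gt (|θ|) 1 with h | h
  · refine le_min h2 ?_
    have habs : ‖(θ:ℂ) * Complex.I‖ = |θ| := by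
      simp
    have h5 := Complex.norm_exp_sub_one_le (x := (θ:ℂ) * Complex.I) (by rw [habs]; exact h)
    rw [habs] at h5
    exact h5
  · exact le_min h2 (h2.trans (by linarith))

lemma harmonic_bound (N : ℕ) : ∑ i ∈ Finset.range N, 1/((i:ℝ)+1) ≤ 2 * Real.log ((N:ℝ)+1) := by
  have key : ∀ i : ℕ, 1/((i:ℝ)+1) ≤
      2 * (Real.log (((i+1:ℕ):ℝ)+1) - Real.log ((i:ℝ)+1)) := by
    intro i
    have h1 : (0:ℝ) < (i:ℝ)+1 := by positivity
    have h2 : (0:ℝ) < (i:ℝ)+2 := by positivity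
    have hlog : Real.log (((i:ℝ)+1)/((i:ℝ)+2)) ≤ ((i:ℝ)+1)/((i:ℝ)+2) - 1 :=
      Real.log_le_sub_one_of_pos (by positivity)
    rw [Real.log_div (ne_of_gt h1) (ne_of_gt h2)] at hlog
    have heq : ((i:ℝ)+1)/((i:ℝ)+2) - 1 = -(1/((i:ℝ)+2)) := by field_simp; ring
    have h3 : 1/((i:ℝ)+2) ≤ Real.log ((i:ℝ)+2) - Real.log ((i:ℝ)+1) := by
      rw [heq] at hlog; linarith
    have h4 : 1/((i:ℝ)+1) ≤ 2 / ((i:ℝ)+2) := by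
      rw [div_le_div_iff₀ h1 h2]; nlinarith
    have hcast : (((i+1:ℕ):ℝ)+1) = (i:ℝ)+2 := by push_cast; ring
    rw [hcast]
    rw [div_eq_mul_one_div 2 ((i:ℝ)+2)] at h4
    linarith
  calc ∑ i ∈ Finset.range N, 1/((i:ℝ)+1)
      ≤ ∑ i ∈ Finset.range N, 2 * (Real.log (((i+1:ℕ):ℝ)+1) - Real.log ((i:ℝ)+1)) :=
        Finset.sum_le_sum fun i _ => key i
    _ = 2 * ∑ i ∈ Finset.range N, (Real.log (((i+1:ℕ):ℝ)+1) - Real.log ((i:ℝ)+1)) := by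
        rw [Finset.mul_sum]
    _ = 2 * (Real.log ((N:ℝ)+1) - Real.log (((0:ℕ):ℝ)+1)) := by
        rw [Finset.sum_range_sub (f := fun i : ℕ => Real.log ((i:ℝ)+1))]
    _ ≤ 2 * Real.log ((N:ℝ)+1) := by norm_num

lemma tail_bound (N M : ℕ) (hN : 1 ≤ N) :
    ∑ i ∈ Finset.range M, (if N ≤ i then 2/((i:ℝ)+1)^2 else 0) ≤ 2/(N:ℝ) := by
  set h : ℕ → ℝ := fun i => if N ≤ i then 2/(i:ℝ) else 2/(N:ℝ) with hh
  have hNR : (0:ℝ) < (N:ℝ) := by exact_mod_cast hN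
  have key : ∀ i : ℕ, (if N ≤ i then 2/((i:ℝ)+1)^2 else 0) ≤ h i - h (i+1) := by
    intro i
    by_cases hi : N ≤ i
    · have hiR : (1:ℝ) ≤ (i:ℝ) := by exact_mod_cast hN.trans hi
      have hi1 : N ≤ i + 1 := hi.trans (Nat.le_succ i)
      simp only [hh, hi, hi1, if_true]
      have hc : ((i+1:ℕ):ℝ) = (i:ℝ)+1 := by push_cast; ring
      rw [hc]
      have e1 : 2/((i:ℝ)) - 2/((i:ℝ)+1) = 2/(((i:ℝ))*((i:ℝ)+1)) := by
        field_simp; ring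
      rw [e1]
      apply div_le_div_of_nonneg_left (by norm_num) (by nlinarith) (by nlinarith)
    · by_cases hi1 : N ≤ i + 1
      · have : N = i + 1 := le_antisymm hi1 (by omega)
        simp only [hh, hi, hi1, if_true, if_false]
        rw [this]
        simp
      · simp [hh, hi, hi1]
  calc ∑ i ∈ Finset.range M, (if N ≤ i then 2/((i:ℝ)+1)^2 else 0)
      ≤ ∑ i ∈ Finset.range M, (h i - h (i+1)) := Finset.sum_le_sum fun i _ => key i
    _ = h 0 - h M := Finset.sum_range_sub' h M
    _ ≤ 2/(N:ℝ) := by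
        have h0 : h 0 = 2/(N:ℝ) := by
          simp only [hh]
          rw [if_neg (by omega)]
        have hM : 0 ≤ h M := by
          simp only [hh]
          split <;> positivity
        linarith

lemma g_sum_bound {t : ℝ} (ht0 : 0 < t) (ht : t < 1/2) (M : ℕ) :
    ∑ i ∈ Finset.range M, min 2 (2*t*((i:ℝ)+1)) / ((i:ℝ)+1)^2 ≤ 20 * t * (-Real.log t) := by
  set L : ℝ := -Real.log t with hL
  have hlog2 : (0.6931471803:ℝ) < Real.log 2 := Real.log_two_gt_d9
  have hL2 : Real.log 2 ≤ L := by
    have : Real.log t < Real.log (1/2) := Real.log_lt_log ht0 ht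
    rw [one_div, Real.log_inv] at this
    linarith
  set N : ℕ := ⌈1/t⌉₊ with hN
  have hinv2 : (2:ℝ) < 1/t := by rw [lt_div_iff₀ ht0]; linarith
  have hN1 : 1 ≤ N := by
    rw [hN, Nat.one_le_ceil_iff]
    linarith
  have hNt : 1/t ≤ (N:ℝ) := Nat.le_ceil _
  have hNR : (0:ℝ) < (N:ℝ) := lt_of_lt_of_le (by linarith) hNt
  have hNlt : (N:ℝ) < 1/t + 1 := Nat.ceil_lt_add_one (by positivity)
  -- termwise bound
  have key : ∀ i : ℕ, min 2 (2*t*((i:ℝ)+1)) / ((i:ℝ)+1)^2 ≤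
      (if N ≤ i then 2/((i:ℝ)+1)^2 else 0) + (if N ≤ i then 0 else 2*t*(1/((i:ℝ)+1))) := by
    intro i
    have hi1 : (0:ℝ) < (i:ℝ)+1 := by positivity
    by_cases hi : N ≤ i
    · simp only [hi, if_true]
      rw [add_zero]
      apply div_le_div_of_nonneg_right ?_ (by positivity)
      · exact min_le_left _ _
    · simp only [hi, if_false]
      rw [zero_add]
      have : min 2 (2*t*((i:ℝ)+1)) / ((i:ℝ)+1)^2 ≤ (2*t*((i:ℝ)+1)) / ((i:ℝ)+1)^2 := by
        apply div_le_div_of_nonneg_right (min_le_right _ _) (by positivity)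
      refine this.trans (le_of_eq ?_)
      field_simp
  have step1 : ∑ i ∈ Finset.range M, min 2 (2*t*((i:ℝ)+1)) / ((i:ℝ)+1)^2 ≤
      (∑ i ∈ Finset.range M, (if N ≤ i then 2/((i:ℝ)+1)^2 else 0)) +
      (∑ i ∈ Finset.range M, (if N ≤ i then 0 else 2*t*(1/((i:ℝ)+1)))) := by
    rw [← Finset.sum_add_distrib]
    exact Finset.sum_le_sum fun i _ => key i
  have step2 : (∑ i ∈ Finset.range M, (if N ≤ i then 0 else 2*t*(1/((i:ℝ)+1)))) ≤
      ∑ i ∈ Finset.range N, 2*t*(1/((i:ℝ)+1)) := by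
    have : (∑ i ∈ Finset.range M, (if N ≤ i then 0 else 2*t*(1/((i:ℝ)+1)))) =
        ∑ i ∈ (Finset.range M).filter (fun i => ¬ N ≤ i), 2*t*(1/((i:ℝ)+1)) := by
      rw [Finset.sum_filter]
      refine Finset.sum_congr rfl fun i _ => ?_
      by_cases h : N ≤ i <;> simp [h]
    rw [this]
    apply Finset.sum_le_sum_of_subset_of_nonneg
    · intro i hi
      simp only [Finset.mem_filter, Finset.mem_range, not_le] at hi
      exact Finset.mem_range.mpr hi.2
    · intro i _ _
      positivity
  have step3 : ∑ i ∈ Finset.range N, 2*t*(1/((i:ℝ)+1)) ≤ 2*t*(2*Real.log ((N:ℝ)+1)) := by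
    rw [← Finset.mul_sum]
    apply mul_le_mul_of_nonneg_left (harmonic_bound N) (by positivity)
  have hlogN : Real.log ((N:ℝ)+1) ≤ Real.log 2 + L := by
    have h1 : (N:ℝ)+1 ≤ 2*(1/t) := by linarith
    have h2 : Real.log ((N:ℝ)+1) ≤ Real.log (2*(1/t)) :=
      Real.log_le_log (by positivity) h1
    rw [Real.log_mul (by norm_num) (by positivity), one_div, Real.log_inv] at h2
    linarith
  have step4 : 2/(N:ℝ) ≤ 2*t := by
    rw [div_le_iff₀ hNR]
    have : t * (1/t) ≤ t * (N:ℝ) := mul_le_mul_of_nonneg_left hNt (le_of_lt ht0)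
    rw [mul_one_div_cancel (ne_of_gt ht0)] at this
    nlinarith
  have halmost : ∑ i ∈ Finset.range M, min 2 (2*t*((i:ℝ)+1)) / ((i:ℝ)+1)^2 ≤
      2*t + 2*t*(2*(Real.log 2 + L)) := by
    have h5 := tail_bound N M hN1
    have h6 : 2*t*(2*Real.log ((N:ℝ)+1)) ≤ 2*t*(2*(Real.log 2 + L)) := by
      apply mul_le_mul_of_nonneg_left (by linarith) (by positivity)
    calc ∑ i ∈ Finset.range M, min 2 (2*t*((i:ℝ)+1)) / ((i:ℝ)+1)^2
        ≤ (∑ i ∈ Finset.range M, (if N ≤ i then 2/((i:ℝ)+1)^2 else 0)) +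
          (∑ i ∈ Finset.range M, (if N ≤ i then 0 else 2*t*(1/((i:ℝ)+1)))) := step1
      _ ≤ 2/(N:ℝ) + ∑ i ∈ Finset.range N, 2*t*(1/((i:ℝ)+1)) := add_le_add h5 step2
      _ ≤ 2*t + 2*t*(2*(Real.log 2 + L)) := add_le_add step4 (step3.trans h6)
  have hLpos : (0:ℝ) < L := lt_of_lt_of_le (by linarith) hL2
  nlinarith [mul_le_mul_of_nonneg_left hL2 (le_of_lt (by linarith : (0:ℝ) < 4*t)),
    mul_pos ht0 hLpos, mul_le_mul_of_nonneg_left hL2 (le_of_lt (by linarith : (0:ℝ) < 3*t)),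
    mul_lt_mul_of_pos_left hlog2 (by linarith : (0:ℝ) < 3*t)]

set_option maxHeartbeats 2000000 in
theorem stmt_14 : ∃ C : ℝ, ∀ t ∈ Set.Ioo (0:ℝ) (1/2),
    ‖∫ x, (Complex.exp (-(Complex.I * (t : ℂ) * (⌊1 / gaussMap x⌋ : ℂ))) - 1) *
          (Complex.exp (Complex.I * (t : ℂ) * (⌊1 / x⌋ : ℂ)) - 1) ∂gaussMeasure‖ ≤
      C * (t * Real.log t) ^ 2 := by
  refine ⟨800, ?_⟩
  rintro t ⟨ht0, ht2⟩
  set L : ℝ := -Real.log t with hLdef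
  have hlog2 : (0.6931471803:ℝ) < Real.log 2 := Real.log_two_gt_d9
  have hL2 : Real.log 2 ≤ L := by
    have : Real.log t < Real.log (1/2) := Real.log_lt_log ht0 ht2
    rw [one_div, Real.log_inv] at this
    simp only [hLdef]
    linarith
  have hLpos : (0:ℝ) < L := lt_of_lt_of_le (by linarith) hL2
  set F : ℝ → ℂ := fun x =>
    (Complex.exp (-(Complex.I * (t : ℂ) * (⌊1 / gaussMap x⌋ : ℂ))) - 1) *
    (Complex.exp (Complex.I * (t : ℂ) * (⌊1 / x⌋ : ℂ)) - 1) with hF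
  -- step 1 : norm of integral
  have h1 : ‖∫ x, F x ∂gaussMeasure‖ ≤ (∫⁻ x, ENNReal.ofReal ‖F x‖ ∂gaussMeasure).toReal :=
    norm_integral_le_lintegral_norm F
  -- step 2 : gaussMeasure ≤ 2 • Lebesgue restricted
  have hμ : gaussMeasure ≤ (2:ℝ≥0∞) • (volume.restrict (Set.Ioo (0:ℝ) 1)) := by
    rw [gaussMeasure, ← withDensity_const]
    apply withDensity_mono
    filter_upwards [ae_restrict_mem measurableSet_Ioo] with x hx
    have hb : 1/((1+x)*Real.log 2) ≤ 2 := by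
      rw [div_le_iff₀ (by nlinarith [hx.1])]
      nlinarith [hx.1]
    calc ENNReal.ofReal (1/((1+x)*Real.log 2)) ≤ ENNReal.ofReal 2 :=
          ENNReal.ofReal_le_ofReal hb
      _ = 2 := by norm_num
  have h2 : ∫⁻ x, ENNReal.ofReal ‖F x‖ ∂gaussMeasure ≤
      2 * ∫⁻ x in Set.Ioo (0:ℝ) 1, ENNReal.ofReal ‖F x‖ := by
    calc ∫⁻ x, ENNReal.ofReal ‖F x‖ ∂gaussMeasure
        ≤ ∫⁻ x, ENNReal.ofReal ‖F x‖ ∂((2:ℝ≥0∞) • volume.restrict (Set.Ioo (0:ℝ) 1)) :=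
          lintegral_mono' hμ le_rfl
      _ = 2 * ∫⁻ x in Set.Ioo (0:ℝ) 1, ENNReal.ofReal ‖F x‖ := lintegral_smul_measure _ _
  -- the intervals
  set A : ℕ × ℕ → Set ℝ := fun p =>
    Set.Ioo (1/(((p.1:ℝ)+1) + 1/((p.2:ℝ)+1))) (1/(((p.1:ℝ)+1) + 1/((p.2:ℝ)+2))) with hA
  have hcover : Set.Ioo (0:ℝ) 1 ⊆ (Set.range ((↑) : ℚ → ℝ)) ∪ ⋃ p, A p := by
    intro x hx
    by_cases hxq : x ∈ Set.range ((↑) : ℚ → ℝ)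
    · exact Or.inl hxq
    right
    have hirr : Irrational x := hxq
    have hx0 : (0:ℝ) < x := hx.1
    have hinv : Irrational (1/x) := by rw [one_div]; exact hirr.inv
    have h1x : 1 < 1/x := by rw [lt_div_iff₀ hx0]; linarith [hx.2]
    set n : ℤ := ⌊1/x⌋ with hn
    have hn1 : 1 ≤ n := by
      rw [hn, Int.le_floor]
      push_cast
      linarith
    have hnlt : (n:ℝ) < 1/x := lt_of_le_of_ne (Int.floor_le _) (fun h => (hinv.ne_int n) h.symm)
    have hnlt2 : 1/x < (n:ℝ)+1 := by
      have h' := Int.lt_floor_add_one (1/x)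
      push_cast at h' ⊢
      rw [← hn] at h'
      exact_mod_cast h'
    set y : ℝ := 1/x - (n:ℝ) with hy
    have hyirr : Irrational y := hinv.sub_intCast n
    have hy0 : (0:ℝ) < y := by rw [hy]; linarith
    have hy1 : y < 1 := by rw [hy]; linarith
    have hinvy : Irrational (1/y) := by rw [one_div]; exact hyirr.inv
    have h1y : 1 < 1/y := by rw [lt_div_iff₀ hy0]; linarith
    set m : ℤ := ⌊1/y⌋ with hm
    have hm1 : 1 ≤ m := by
      rw [hm, Int.le_floor]
      push_cast
      linarith
    have hmlt : (m:ℝ) < 1/y := lt_of_le_of_ne (Int.floor_le _) (fun h => (hinvy.ne_int m) h.symm)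
    have hmlt2 : 1/y < (m:ℝ)+1 := by
      have h' := Int.lt_floor_add_one (1/y)
      push_cast at h' ⊢
      rw [← hm] at h'
      exact_mod_cast h'
    have hnR : (0:ℝ) < (n:ℝ) := by exact_mod_cast lt_of_lt_of_le zero_lt_one hn1
    have hmR : (0:ℝ) < (m:ℝ) := by exact_mod_cast lt_of_lt_of_le zero_lt_one hm1
    refine Set.mem_iUnion.mpr ⟨((n-1).toNat, (m-1).toNat), ?_⟩
    have hcn : ((((n-1).toNat : ℕ)):ℝ) + 1 = (n:ℝ) := by
      have h' : (((n-1).toNat : ℕ) : ℤ) = n - 1 := Int.toNat_of_nonneg (by omega)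
      have h'' : ((((n-1).toNat : ℕ)):ℝ) = ((n:ℝ) - 1) := by exact_mod_cast congrArg (Int.cast : ℤ → ℝ) h'
      rw [h'']; ring
    have hcm : ((((m-1).toNat : ℕ)):ℝ) + 1 = (m:ℝ) := by
      have h' : (((m-1).toNat : ℕ) : ℤ) = m - 1 := Int.toNat_of_nonneg (by omega)
      have h'' : ((((m-1).toNat : ℕ)):ℝ) = ((m:ℝ) - 1) := by exact_mod_cast congrArg (Int.cast : ℤ → ℝ) h'
      rw [h'']; ring
    have hcm2 : ((((m-1).toNat : ℕ)):ℝ) + 2 = (m:ℝ) + 1 := by rw [← hcm]; ring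
    simp only [hA, Set.mem_Ioo]
    rw [hcn, hcm, hcm2]
    have hxinv : 1/x = (n:ℝ) + y := by rw [hy]; ring
    constructor
    · have hym : y < 1/(m:ℝ) := by
        have h' := one_div_lt_one_div_of_lt hmR hmlt
        rwa [one_div_one_div] at h'
      have hub : 1/x < (n:ℝ) + 1/(m:ℝ) := by rw [hxinv]; linarith
      have h' := one_div_lt_one_div_of_lt (by positivity : (0:ℝ) < 1/x) hub
      rwa [one_div_one_div] at h'
    · have hym2 : 1/((m:ℝ)+1) < y := by
        have h' := one_div_lt_one_div_of_lt (by positivity : (0:ℝ) < 1/y) hmlt2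
        rwa [one_div_one_div] at h'
      have hlb : (n:ℝ) + 1/((m:ℝ)+1) < 1/x := by rw [hxinv]; linarith
      have hpos : (0:ℝ) < (n:ℝ) + 1/((m:ℝ)+1) :=
        add_pos hnR (one_div_pos.mpr (by linarith))
      have h' := one_div_lt_one_div_of_lt hpos hlb
      rwa [one_div_one_div] at h'
  set g : ℕ → ℝ := fun i => min 2 (2*t*((i:ℝ)+1)) / ((i:ℝ)+1)^2 with hg
  have hgnn : ∀ i : ℕ, 0 ≤ g i := fun i =>
    div_nonneg (le_min (by norm_num) (by positivity)) (by positivity)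
  have hAbound : ∀ p : ℕ × ℕ, (∫⁻ x in A p, ENNReal.ofReal ‖F x‖) ≤
      ENNReal.ofReal (g p.1) * ENNReal.ofReal (g p.2) := by
    rintro ⟨i, j⟩
    have hN1 : (1:ℝ) ≤ (i:ℝ)+1 := by
      have : (0:ℝ) ≤ (i:ℝ) := Nat.cast_nonneg i
      linarith
    have hM1 : (1:ℝ) ≤ (j:ℝ)+1 := by
      have : (0:ℝ) ≤ (j:ℝ) := Nat.cast_nonneg j
      linarith
    set N : ℝ := (i:ℝ)+1 with hNdef
    set Mr : ℝ := (j:ℝ)+1 with hMdef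
    have hN0 : (0:ℝ) < N := by linarith
    have hM0 : (0:ℝ) < Mr := by linarith
    have ha0 : (0:ℝ) < N + 1/Mr := by positivity
    have hb0 : (0:ℝ) < N + 1/(Mr+1) := by positivity
    have hAij : A (i,j) = Set.Ioo (1/(N + 1/Mr)) (1/(N + 1/(Mr+1))) := by
      simp only [hA]
      norm_num [hNdef, hMdef]
      ring_nf
    -- pointwise bound on A (i,j)
    have hpt : ∀ x ∈ A (i,j), ‖F x‖ ≤ min 2 (2*t*Mr) * min 2 (2*t*N) := by
      intro x hxA
      rw [hAij, Set.mem_Ioo] at hxA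
      have hx0 : (0:ℝ) < x := lt_trans (by positivity) hxA.1
      have hub : 1/x < N + 1/Mr := by
        have h' := one_div_lt_one_div_of_lt (by positivity : (0:ℝ) < 1/(N + 1/Mr)) hxA.1
        rwa [one_div_one_div] at h'
      have hlb : N + 1/(Mr+1) < 1/x := by
        have h' := one_div_lt_one_div_of_lt hx0 hxA.2
        rwa [one_div_one_div] at h'
      have hfl1 : ⌊1/x⌋ = (i:ℤ)+1 := by
        rw [Int.floor_eq_iff]
        constructor
        · push_cast
          have : (0:ℝ) < 1/(Mr+1) := by positivity
          simp only [hNdef] at hlb ⊢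
          linarith
        · push_cast
          have : 1/Mr ≤ 1 := by
            rw [div_le_one hM0]; linarith
          simp only [hNdef] at hub ⊢
          linarith
      have hyval : gaussMap x = 1/x - N := by
        rw [gaussMap, ← Int.self_sub_floor, hfl1]
        push_cast [hNdef]
        ring
      have hy0 : 0 < gaussMap x := by
        rw [hyval]
        have : (0:ℝ) < 1/(Mr+1) := by positivity
        linarith
      have hyub : gaussMap x < 1/Mr := by rw [hyval]; linarith
      have hylb : 1/(Mr+1) < gaussMap x := by rw [hyval]; linarith
      have hfl2 : ⌊1/gaussMap x⌋ = (j:ℤ)+1 := by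
        have h1 : Mr < 1/gaussMap x := by
          have h' := one_div_lt_one_div_of_lt hy0 hyub
          rwa [one_div_one_div] at h'
        have h2 : 1/gaussMap x < Mr+1 := by
          have h' := one_div_lt_one_div_of_lt (by positivity : (0:ℝ) < 1/(Mr+1)) hylb
          rwa [one_div_one_div] at h'
        rw [Int.floor_eq_iff]
        constructor
        · push_cast
          simp only [hMdef] at h1 ⊢
          linarith
        · push_cast
          simp only [hMdef] at h2 ⊢
          linarith
      -- now bound the norm
      have e1 : -(Complex.I * (t:ℂ) * ((⌊1/gaussMap x⌋ : ℤ):ℂ)) = ((-(t*Mr):ℝ):ℂ) * Complex.I := by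
        rw [hfl2]
        push_cast [hMdef]
        ring
      have e2 : Complex.I * (t:ℂ) * ((⌊1/x⌋ : ℤ):ℂ) = (((t*N):ℝ):ℂ) * Complex.I := by
        rw [hfl1]
        push_cast [hNdef]
        ring
      have hb1 : ‖Complex.exp (-(Complex.I * (t:ℂ) * ((⌊1/gaussMap x⌋ : ℤ):ℂ))) - 1‖ ≤ min 2 (2*t*Mr) := by
        rw [e1]
        have h' := exp_I_bound (-(t*Mr))
        rwa [abs_neg, abs_of_pos (by positivity), ← mul_assoc] at h'
      have hb2 : ‖Complex.exp (Complex.I * (t:ℂ) * ((⌊1/x⌋ : ℤ):ℂ)) - 1‖ ≤ min 2 (2*t*N) := by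
        rw [e2]
        have h' := exp_I_bound (t*N)
        rwa [abs_of_pos (by positivity), ← mul_assoc] at h'
      rw [hF]
      simp only [norm_mul]
      exact mul_le_mul hb1 hb2 (norm_nonneg _) (le_min (by norm_num) (by positivity))
    -- integrate the constant bound
    have hconst : (∫⁻ x in A (i,j), ENNReal.ofReal ‖F x‖) ≤
        ENNReal.ofReal (min 2 (2*t*Mr) * min 2 (2*t*N)) * volume (A (i,j)) := by
      calc (∫⁻ x in A (i,j), ENNReal.ofReal ‖F x‖)
          ≤ ∫⁻ _ in A (i,j), ENNReal.ofReal (min 2 (2*t*Mr) * min 2 (2*t*N)) := by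
            apply lintegral_mono_ae
            have hmeas : MeasurableSet (A (i,j)) := by rw [hAij]; exact measurableSet_Ioo
            filter_upwards [ae_restrict_mem hmeas] with x hxA
            exact ENNReal.ofReal_le_ofReal (hpt x hxA)
        _ = _ := setLIntegral_const _ _
    have hvol : volume (A (i,j)) ≤ ENNReal.ofReal (1/(N^2*Mr^2)) := by
      rw [hAij, Real.volume_Ioo]
      apply ENNReal.ofReal_le_ofReal
      have e3 : 1/(N + 1/(Mr+1)) - 1/(N + 1/Mr) = (1/(Mr*(Mr+1)))/((N + 1/(Mr+1))*(N + 1/Mr)) := by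
        field_simp
        ring
      rw [e3]
      have hnum : 1/(Mr*(Mr+1)) ≤ 1/Mr^2 :=
        div_le_div_of_nonneg_left (by norm_num) (by positivity) (by nlinarith)
      have hden : N^2 ≤ (N + 1/(Mr+1))*(N + 1/Mr) := by
        have hd1 : (0:ℝ) < 1/(Mr+1) := by positivity
        have hd2 : (0:ℝ) < 1/Mr := by positivity
        nlinarith
      calc (1/(Mr*(Mr+1)))/((N + 1/(Mr+1))*(N + 1/Mr))
          ≤ (1/Mr^2)/(N^2) := div_le_div₀ (by positivity) hnum (by positivity) hden
        _ = 1/(N^2*Mr^2) := by field_simp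
    calc (∫⁻ x in A (i,j), ENNReal.ofReal ‖F x‖)
        ≤ ENNReal.ofReal (min 2 (2*t*Mr) * min 2 (2*t*N)) * ENNReal.ofReal (1/(N^2*Mr^2)) :=
          le_trans hconst (mul_le_mul_right hvol _)
      _ = ENNReal.ofReal (g i) * ENNReal.ofReal (g j) := by
          have hmin : (0:ℝ) ≤ min 2 (2*t*Mr) * min 2 (2*t*N) :=
            mul_nonneg (le_min (by norm_num) (by positivity)) (le_min (by norm_num) (by positivity))
          rw [← ENNReal.ofReal_mul hmin, ← ENNReal.ofReal_mul (hgnn i)]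
          congr 1
          simp only [hg, hNdef, hMdef]
          have hN0' : ((i:ℝ)+1) ≠ 0 := by positivity
          have hM0' : ((j:ℝ)+1) ≠ 0 := by positivity
          field_simp
  have hS : (∑' i, ENNReal.ofReal (g i)) ≤ ENNReal.ofReal (20*t*L) := by
    rw [ENNReal.tsum_eq_iSup_sum]
    apply iSup_le
    intro s
    obtain ⟨M, hM⟩ := s.exists_nat_subset_range
    calc ∑ i ∈ s, ENNReal.ofReal (g i)
        ≤ ∑ i ∈ Finset.range M, ENNReal.ofReal (g i) := Finset.sum_le_sum_of_subset hM
      _ = ENNReal.ofReal (∑ i ∈ Finset.range M, g i) :=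
          (ENNReal.ofReal_sum_of_nonneg (fun i _ => hgnn i)).symm
      _ ≤ ENNReal.ofReal (20*t*L) := by
          apply ENNReal.ofReal_le_ofReal
          simpa only [hg, hLdef] using g_sum_bound ht0 ht2 M
  have h3 : (∫⁻ x in Set.Ioo (0:ℝ) 1, ENNReal.ofReal ‖F x‖) ≤
      ENNReal.ofReal (20*t*L) * ENNReal.ofReal (20*t*L) := by
    calc (∫⁻ x in Set.Ioo (0:ℝ) 1, ENNReal.ofReal ‖F x‖)
        ≤ ∫⁻ x in (Set.range ((↑) : ℚ → ℝ)) ∪ ⋃ p, A p, ENNReal.ofReal ‖F x‖ :=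
          lintegral_mono_set hcover
      _ ≤ (∫⁻ x in Set.range ((↑) : ℚ → ℝ), ENNReal.ofReal ‖F x‖) +
          ∫⁻ x in ⋃ p, A p, ENNReal.ofReal ‖F x‖ := lintegral_union_le _ _ _
      _ ≤ 0 + ∑' p : ℕ × ℕ, ∫⁻ x in A p, ENNReal.ofReal ‖F x‖ := by
          apply add_le_add
          · apply le_of_eq
            rw [Measure.restrict_eq_zero.mpr (Set.Countable.measure_zero (Set.countable_range _) _),
              lintegral_zero_measure]
          · exact lintegral_iUnion_le _ _
      _ ≤ 0 + ∑' p : ℕ × ℕ, ENNReal.ofReal (g p.1) * ENNReal.ofReal (g p.2) :=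
          add_le_add le_rfl (ENNReal.tsum_le_tsum hAbound)
      _ = (∑' i, ENNReal.ofReal (g i)) * (∑' i, ENNReal.ofReal (g i)) := by
          rw [zero_add, ENNReal.tsum_prod']
          simp only [ENNReal.tsum_mul_left]
          rw [ENNReal.tsum_mul_right]
      _ ≤ _ := mul_le_mul' hS hS
  have h4 : (∫⁻ x, ENNReal.ofReal ‖F x‖ ∂gaussMeasure) ≤ ENNReal.ofReal (800*(t*L)^2) := by
    calc (∫⁻ x, ENNReal.ofReal ‖F x‖ ∂gaussMeasure)
        ≤ 2 * ∫⁻ x in Set.Ioo (0:ℝ) 1, ENNReal.ofReal ‖F x‖ := h2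
      _ ≤ 2 * (ENNReal.ofReal (20*t*L) * ENNReal.ofReal (20*t*L)) := mul_le_mul_right h3 _
      _ = ENNReal.ofReal (800*(t*L)^2) := by
          rw [← ENNReal.ofReal_mul (by positivity : (0:ℝ) ≤ 20*t*L)]
          rw [show (2:ℝ≥0∞) = ENNReal.ofReal 2 by norm_num]
          rw [← ENNReal.ofReal_mul (by norm_num : (0:ℝ) ≤ 2)]
          congr 1
          ring
  have hne : ENNReal.ofReal (800*(t*L)^2) ≠ ⊤ := ENNReal.ofReal_ne_top
  have h5 := h1.trans (ENNReal.toReal_mono hne h4)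
  rw [ENNReal.toReal_ofReal (by positivity)] at h5
  calc ‖∫ x, F x ∂gaussMeasure‖ ≤ 800*(t*L)^2 := h5
    _ = 800 * (t * Real.log t)^2 := by rw [hLdef]; ring
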